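/- Let X ∈ B(H_A, H_C) be a bounded operator between Hilbert spaces. Then the operator norm of X (I + X*X)^{-1/2} equals ‖X‖ / (1 + ‖X‖²)^{1/2}. -/

import Mathlib

private lemma le_of_sq_le_sq' {x y : ℝ} (hx : 0 ≤ x) (hy : 0 ≤ y)
    (h : x ^ 2 ≤ y ^ 2) : x ≤ y := by nlinarith

/-- For any bounded operator `X` between Hilbert spaces,
`‖X (I + X*X)^{-1/2}‖ = ‖X‖ / (1 + ‖X‖²)^{1/2}`. -/
theorem norm_comp_inv_sqrt_one_add
    {HA HC : Type*} [NormedAddCommGroup HA] [InnerProductSpace ℂ HA] [CompleteSpace HA]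
    [NormedAddCommGroup HC] [InnerProductSpace ℂ HC] [CompleteSpace HC]
    (X : HA →L[ℂ] HC)
    (S : HA →L[ℂ] HA) (hSpos : S.IsPositive)
    (hSsq : S ∘L S = 1 + ContinuousLinearMap.adjoint X ∘L X)
    (Sinv : HA →L[ℂ] HA) (hSinv : S ∘L Sinv = 1) (hSinv' : Sinv ∘L S = 1) :
    ‖X ∘L Sinv‖ = ‖X‖ / Real.sqrt (1 + ‖X‖ ^ 2) := by
  set b := ‖X‖ with hb
  have hb0 : 0 ≤ b := norm_nonneg X
  set k := Real.sqrt (1 + b ^ 2) with hk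
  have hk2 : k ^ 2 = 1 + b ^ 2 := Real.sq_sqrt (by positivity)
  have hkpos : 0 < k := Real.sqrt_pos.2 (by positivity)
  have hsa : ContinuousLinearMap.adjoint S = S := ContinuousLinearMap.isSelfAdjoint_iff'.1 hSpos.isSelfAdjoint
  -- key identity
  have key : ∀ u : HA, ‖S u‖ ^ 2 = ‖u‖ ^ 2 + ‖X u‖ ^ 2 := by
    intro u
    have h1 : (inner ℂ (S u) (S u) : ℂ) = inner ℂ u (S (S u)) := by
      rw [← ContinuousLinearMap.adjoint_inner_right S u (S u), hsa]
    have h2 : S (S u) = u + ContinuousLinearMap.adjoint X (X u) := by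
      have := congrArg (fun T : HA →L[ℂ] HA => T u) hSsq
      simpa using this
    have h3 : (inner ℂ (S u) (S u) : ℂ) = inner ℂ u u + inner ℂ (X u) (X u) := by
      rw [h1, h2, inner_add_right, ContinuousLinearMap.adjoint_inner_right]
    have h4 : ((‖S u‖ : ℂ)) ^ 2 = (‖u‖ : ℂ) ^ 2 + (‖X u‖ : ℂ) ^ 2 := by
      simpa [inner_self_eq_norm_sq_to_K] using h3
    exact_mod_cast h4
  set Y := X ∘L Sinv with hY
  set a := ‖Y‖ with ha
  have ha0 : 0 ≤ a := norm_nonneg Y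
  -- upper bound : a ≤ b / k
  have hupper : a ≤ b / k := by
    apply ContinuousLinearMap.opNorm_le_bound _ (by positivity)
    intro x
    set u := Sinv x with hu
    have hSu : S u = x := by
      have := congrArg (fun T : HA →L[ℂ] HA => T x) hSinv
      simpa using this
    have hx2 : ‖x‖ ^ 2 = ‖u‖ ^ 2 + ‖X u‖ ^ 2 := by rw [← hSu]; exact key u
    have hXu : ‖X u‖ ≤ b * ‖u‖ := X.le_opNorm u
    have hYx : ‖Y x‖ = ‖X u‖ := rfl
    rw [hYx, div_mul_eq_mul_div, le_div_iff₀ hkpos]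
    -- ‖X u‖ * k ≤ b * ‖x‖
    have h1 : (‖X u‖ * k) ^ 2 ≤ (b * ‖x‖) ^ 2 := by
      have := norm_nonneg u
      nlinarith [norm_nonneg (X u), hx2, hkpos.le]
    exact le_of_sq_le_sq' (mul_nonneg (norm_nonneg _) hkpos.le) (by positivity) h1
  -- lower bound : b ≤ a * k
  have hlower : b ≤ a * k := by
    apply ContinuousLinearMap.opNorm_le_bound _ (by positivity)
    intro u
    have hYSu : Y (S u) = X u := by
      have : Sinv (S u) = u := by
        have := congrArg (fun T : HA →L[ℂ] HA => T u) hSinv'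
        simpa using this
      simp [hY, ContinuousLinearMap.comp_apply, this]
    have h1 : ‖X u‖ ≤ a * ‖S u‖ := by rw [← hYSu]; exact Y.le_opNorm (S u)
    have h2 : ‖S u‖ ≤ k * ‖u‖ := by
      have hXu : ‖X u‖ ≤ b * ‖u‖ := X.le_opNorm u
      have hsq : ‖S u‖ ^ 2 ≤ (k * ‖u‖) ^ 2 := by
        rw [key u]; nlinarith [norm_nonneg (X u), norm_nonneg u]
      exact le_of_sq_le_sq' (norm_nonneg _) (by positivity) hsq
    calc ‖X u‖ ≤ a * ‖S u‖ := h1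
      _ ≤ a * (k * ‖u‖) := mul_le_mul_of_nonneg_left h2 ha0
      _ = a * k * ‖u‖ := by ring
  have : b / k ≤ a := (div_le_iff₀ hkpos).2 hlower
  linarith
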